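/- For every ε > 0 there exist ρ > 1 and u > 0 such that sup_{Ψ ∈ 𝕂_{𝒢'}} sup_{1 ≤ ρ' ≤ ρ, 0 ≤ u' ≤ u} sup_{K ∈ 𝒢} | α(ρ', u') Ψ(K_{ρ'}) − Ψ(K) | ≤ ε, where α(ρ', u') := (ρ'^{−1}(1 + u' log ρ'))^{1/2} and K_{ρ'}(x) := K(ρ'^{−1/d} x). -/

import Mathlib

open MeasureTheory ProbabilityTheory Filter Set
open scoped ENNReal NNReal Topology ProbabilityTheory

noncomputable section

/-- `K ((x - z) / h^(1/d))`. -/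
def rescaleK (d : ℕ) (K : (Fin d → ℝ) → ℝ) (h : ℝ) (z x : Fin d → ℝ) : ℝ :=
  K ((h ^ (1 / (d : ℝ)))⁻¹ • (x - z))

/-- The local empirical process `G_n(K, h, z)` of the paper. -/
def Gproc {Ω : Type} [MeasureSpace Ω] (d : ℕ) (Z : ℕ → Ω → (Fin d → ℝ))
    (n : ℕ) (K : (Fin d → ℝ) → ℝ) (h : ℝ) (z : Fin d → ℝ) (ω : Ω) : ℝ :=
  ∑ i ∈ Finset.range n,
    (rescaleK d K h z (Z (i + 1) ω) - ∫ ω', rescaleK d K h z (Z 1 ω') ∂(ℙ : Measure Ω))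

/-- The poissonized local empirical process `G̃_n(K, h, z)`. -/
def Gtilde {Ω : Type} [MeasureSpace Ω] (d : ℕ) (Z : ℕ → Ω → (Fin d → ℝ)) (η : ℕ → Ω → ℕ)
    (n : ℕ) (K : (Fin d → ℝ) → ℝ) (h : ℝ) (z : Fin d → ℝ) (ω : Ω) : ℝ :=
  (∑ i ∈ Finset.range (η n ω), rescaleK d K h z (Z (i + 1) ω)) -
    (n : ℝ) * ∫ ω', rescaleK d K h z (Z 1 ω') ∂(ℙ : Measure Ω)

/-- sup-norm over the index class `S` : `‖Φ‖_S`. -/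
def supNormOn {α : Type*} (S : Set α) (Φ : α → ℝ) : ℝ := ⨆ K ∈ S, |Φ K|

/-- `g` belongs to the closed linear subspace of `L²` spanned by `𝒢`. -/
def inL2ClosedSpan (d : ℕ) (𝒢 : Set ((Fin d → ℝ) → ℝ)) (g : (Fin d → ℝ) → ℝ) : Prop :=
  ∀ ε > 0, ∃ p ∈ Submodule.span ℝ 𝒢, ∫ x, (g x - p x) ^ 2 < ε

/-- The rate function `J` of the isonormal Gaussian process generated by `(L²_*(𝒢), λ)`. -/
def JrateFn (d : ℕ) (𝒢 : Set ((Fin d → ℝ) → ℝ)) (Ψ : ((Fin d → ℝ) → ℝ) → ℝ) : ℝ≥0∞ :=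
  sInf {c : ℝ≥0∞ | ∃ g : (Fin d → ℝ) → ℝ, Measurable g ∧
    MemLp g 2 (volume : Measure (Fin d → ℝ)) ∧ inL2ClosedSpan d 𝒢 g ∧
    (∀ K ∈ 𝒢, Ψ K = ∫ x, g x * K x) ∧ c = ENNReal.ofReal (∫ x, (g x) ^ 2)}

/-- `𝕂 = {Ψ : J(Ψ) ≤ 1}`. -/
def KsetG (d : ℕ) (𝒢 : Set ((Fin d → ℝ) → ℝ)) : Set ((((Fin d → ℝ) → ℝ)) → ℝ) :=
  {Ψ | JrateFn d 𝒢 Ψ ≤ 1}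

/-- The class `ℱ = {K(λ(· - z))}`. -/
def Fclass (d : ℕ) (𝒢 : Set ((Fin d → ℝ) → ℝ)) : Set ((Fin d → ℝ) → ℝ) :=
  {F | ∃ K ∈ 𝒢, ∃ z : Fin d → ℝ, ∃ lam : ℝ, 0 < lam ∧ F = fun x => K (lam • (x - z))}

/-- Uniform covering number bound `𝒩(ε, F) ≤ N`, w.r.t. `L²(P)` over all probability
measures `P`, with envelope function `env`. -/
def UnifCoveringLE (d : ℕ) (F : Set ((Fin d → ℝ) → ℝ)) (env : (Fin d → ℝ) → ℝ)
    (ε N : ℝ) : Prop :=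
  ∀ P : Measure (Fin d → ℝ), IsProbabilityMeasure P →
    ∃ S : Finset ((Fin d → ℝ) → ℝ), (S.card : ℝ) ≤ N ∧
      ∀ g ∈ F, ∃ s ∈ S, ∫ x, (g x - s x) ^ 2 ∂P ≤ ε ^ 2 * ∫ x, env x ^ 2 ∂P

/-- Pointwise separability of a class of functions. -/
def PointwiseSeparable (d : ℕ) (F : Set ((Fin d → ℝ) → ℝ)) : Prop :=
  ∃ F₀ ⊆ F, F₀.Countable ∧ ∀ g ∈ F, ∃ u : ℕ → ((Fin d → ℝ) → ℝ),
    (∀ n, u n ∈ F₀) ∧ ∀ x, Tendsto (fun n => u n x) atTop (𝓝 (g x))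

/-- Assumptions (HK1), (HK2), (HK4), (HK5) on the class `𝒢` (plus Borel measurability). -/
structure HKbase (d : ℕ) (𝒢 : Set ((Fin d → ℝ) → ℝ)) : Prop where
  meas : ∀ K ∈ 𝒢, Measurable K
  hk1a : Tendsto (fun u : Fin d → ℝ => ⨆ K ∈ 𝒢, ∫ x, (K x - K (x + u)) ^ 2) (𝓝 0) (𝓝 0)
  hk1b : Tendsto (fun lam : ℝ => ⨆ K ∈ 𝒢, ∫ x, (K (lam • x) - K x) ^ 2) (𝓝 1) (𝓝 0)
  hk2 : ∀ K ∈ 𝒢, ∀ x, |K x| ≤ 1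
  hk4 : ∃ C₀ > (0:ℝ), ∃ v₀ > (0:ℝ), ∀ ε ∈ Ioo (0:ℝ) 1,
    UnifCoveringLE d (Fclass d 𝒢) (fun _ => 1) ε (C₀ * ε ^ (-v₀))
  hk5 : PointwiseSeparable d (Fclass d 𝒢)

/-- Assumption (HK3): `K` vanishes outside `[0,1]^d`. -/
def HK3 (d : ℕ) (𝒢 : Set ((Fin d → ℝ) → ℝ)) : Prop :=
  ∀ K ∈ 𝒢, ∀ x ∉ Icc (0 : Fin d → ℝ) 1, K x = 0

/-- The i.i.d. assumption on the sample `(Z_i)_{i ≥ 1}`. -/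
def IIDseq {Ω : Type} [MeasureSpace Ω] {d : ℕ} (Z : ℕ → Ω → (Fin d → ℝ)) : Prop :=
  (∀ i, Measurable (Z i)) ∧ iIndepFun Z (ℙ : Measure Ω) ∧
    ∀ i, Measure.map (Z i) (ℙ : Measure Ω) = Measure.map (Z 1) (ℙ : Measure Ω)

/-- Assumption (Hf) : `Z_1` has a density `f` that is continuous and strictly positive on an
`α`-neighbourhood of `H` (for the max-norm, which is the sup metric of `Fin d → ℝ`). -/
structure HfCond {Ω : Type} [MeasureSpace Ω] (d : ℕ) (Z : ℕ → Ω → (Fin d → ℝ))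
    (H : Set (Fin d → ℝ)) (f : (Fin d → ℝ) → ℝ) (α : ℝ) : Prop where
  αpos : 0 < α
  density : Measure.map (Z 1) (ℙ : Measure Ω) =
    (volume : Measure (Fin d → ℝ)).withDensity (fun x => ENNReal.ofReal (f x))
  cont : ContinuousOn f {z | Metric.infDist z H < α}
  fpos : ∀ z, Metric.infDist z H < α → 0 < f z

/-- The Csörgő–Révész–Stute conditions (HV1)–(HV3). -/
def CRSseq (h : ℕ → ℝ) : Prop :=
  (∀ n, 0 < h n ∧ h n < 1) ∧ Antitone h ∧ Tendsto h atTop (𝓝 0) ∧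
  Monotone (fun n : ℕ => (n : ℝ) * h n) ∧ Tendsto (fun n : ℕ => (n : ℝ) * h n) atTop atTop ∧
  Tendsto (fun n : ℕ => (n : ℝ) * h n / Real.log n) atTop atTop ∧
  Tendsto (fun n : ℕ => Real.log (1 / h n) / Real.log (Real.log n)) atTop atTop

/-- The normalized local empirical process `G_n(·,h,z)/√(2 f(z) n h log (1/h))`. -/
def normG {Ω : Type} [MeasureSpace Ω] (d : ℕ) (Z : ℕ → Ω → (Fin d → ℝ))
    (f : (Fin d → ℝ) → ℝ) (n : ℕ) (h : ℝ) (z : Fin d → ℝ) (ω : Ω)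
    (K : (Fin d → ℝ) → ℝ) : ℝ :=
  Gproc d Z n K h z ω / Real.sqrt (2 * f z * n * h * Real.log (1 / h))


/-- The dilated kernel `K_{ρ'}(x) = K(ρ'^{-1/d} x)`. -/
def Kdil (d : ℕ) (K : (Fin d → ℝ) → ℝ) (ρ' : ℝ) : (Fin d → ℝ) → ℝ :=
  fun x => K ((ρ' ^ (1 / (d : ℝ)))⁻¹ • x)

/-- The class `𝒢' = {K_{ρ'} : K ∈ 𝒢, 1 ≤ ρ' ≤ 2}`. -/
def Gdil (d : ℕ) (𝒢 : Set ((Fin d → ℝ) → ℝ)) : Set ((Fin d → ℝ) → ℝ) :=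
  {F | ∃ K ∈ 𝒢, ∃ ρ' ∈ Icc (1:ℝ) 2, F = Kdil d K ρ'}

namespace Statement16Helpers

open MeasureTheory Set

lemma memL2 {d : ℕ} (h : (Fin d → ℝ) → ℝ) (hm : Measurable h)
    (hb : ∀ x, |h x| ≤ 1) (hs : ∀ x ∉ Icc (0:Fin d → ℝ) 2, h x = 0) :
    MemLp h 2 (volume : Measure (Fin d → ℝ)) := by
  have hfin : volume (Icc (0:Fin d → ℝ) 2) ≠ ⊤ :=
    (isCompact_Icc.measure_lt_top).ne
  refine MemLp.of_le (memLp_indicator_const 2 measurableSet_Icc (1:ℝ) (Or.inr hfin))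
    hm.aestronglyMeasurable (Filter.Eventually.of_forall fun x => ?_)
  by_cases hx : x ∈ Icc (0:Fin d → ℝ) 2
  · rw [Set.indicator_of_mem hx]
    simpa using hb x
  · rw [Set.indicator_of_notMem hx, hs x hx]

lemma CS {d : ℕ} (f g : (Fin d → ℝ) → ℝ)
    (hf : MemLp f 2 (volume : Measure (Fin d → ℝ)))
    (hg : MemLp g 2 (volume : Measure (Fin d → ℝ))) :
    |∫ x, f x * g x| ≤ Real.sqrt (∫ x, f x ^ 2) * Real.sqrt (∫ x, g x ^ 2) := by
  have hpq : (2:ℝ).HolderConjugate 2 := Real.HolderConjugate.two_two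
  have h2 : ENNReal.ofReal (2:ℝ) = 2 := by norm_num
  have H := integral_mul_norm_le_Lp_mul_Lq (μ := (volume : Measure (Fin d → ℝ)))
    (f := f) (g := g) hpq (by rw [h2]; exact hf) (by rw [h2]; exact hg)
  have habs : |∫ x, f x * g x| ≤ ∫ x, ‖f x‖ * ‖g x‖ := by
    calc |∫ x, f x * g x| = ‖∫ x, f x * g x‖ := (Real.norm_eq_abs _).symm
    _ ≤ ∫ x, ‖f x * g x‖ := norm_integral_le_integral_norm _
    _ = ∫ x, ‖f x‖ * ‖g x‖ := by simp [abs_mul]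
  have e1 : ∀ (u : (Fin d → ℝ) → ℝ), (∫ x, ‖u x‖ ^ (2:ℝ)) = ∫ x, u x ^ 2 := by
    intro u
    refine integral_congr_ae (Filter.Eventually.of_forall fun x => ?_)
    simp only [Real.rpow_two]
    simp [sq_abs]
  rw [e1, e1] at H
  have hsq : ∀ (u : (Fin d → ℝ) → ℝ), (∫ x, u x ^ 2) ^ ((1:ℝ)/2) = Real.sqrt (∫ x, u x ^ 2) := by
    intro u; rw [Real.sqrt_eq_rpow]
  rw [hsq, hsq] at H
  exact habs.trans H

lemma intmul {d : ℕ} (f g : (Fin d → ℝ) → ℝ)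
    (hf : MemLp f 2 (volume : Measure (Fin d → ℝ)))
    (hg : MemLp g 2 (volume : Measure (Fin d → ℝ))) :
    Integrable (fun x => f x * g x) (volume : Measure (Fin d → ℝ)) := by
  refine Integrable.mono' ((hf.integrable_sq.add hg.integrable_sq).div_const 2)
    (hf.1.mul hg.1) (Filter.Eventually.of_forall fun x => ?_)
  have h1 : ‖f x * g x‖ = |f x| * |g x| := by simp [abs_mul]
  rw [h1]
  have : |f x| * |g x| ≤ (f x ^ 2 + g x ^ 2) / 2 := by
    nlinarith [sq_abs (f x), sq_abs (g x), sq_nonneg (|f x| - |g x|)]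
  simpa using this

lemma int_le_of_le_indicator {d : ℕ} (F : (Fin d → ℝ) → ℝ)
    (hi : Integrable F (volume : Measure (Fin d → ℝ))) (M : ℝ)
    (hb : ∀ x, F x ≤ Set.indicator (Icc (0:Fin d → ℝ) 2) (fun _ => M) x) :
    ∫ x, F x ≤ M * 2 ^ d := by
  have hind : Integrable (Set.indicator (Icc (0:Fin d → ℝ) 2) (fun _ => M))
      (volume : Measure (Fin d → ℝ)) :=
    (integrable_indicator_iff measurableSet_Icc).mpr
      (integrableOn_const isCompact_Icc.measure_lt_top.ne)
  have h1 := integral_mono hi hind hb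
  have h2 : ∫ x, Set.indicator (Icc (0:Fin d → ℝ) 2) (fun _ => M) x =
      (volume (Icc (0:Fin d → ℝ) 2)).toReal • M := integral_indicator_const M measurableSet_Icc
  have h3 : (volume (Icc (0:Fin d → ℝ) 2)).toReal = 2 ^ d := by
    rw [Real.volume_Icc_pi_toReal (by intro i; norm_num)]
    simp
  rw [h2, h3, smul_eq_mul, mul_comm] at h1
  exact h1

lemma dil_support {d : ℕ} (K : (Fin d → ℝ) → ℝ)
    (hK3 : ∀ x ∉ Icc (0:Fin d → ℝ) 1, K x = 0) (lam : ℝ) (hl : 1/2 ≤ lam) (hl1 : lam ≤ 1) :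
    ∀ x ∉ Icc (0:Fin d → ℝ) 2, K (lam • x) = 0 := by
  intro x hx
  refine hK3 _ fun hmem => hx ?_
  rw [Set.mem_Icc, Pi.le_def, Pi.le_def] at hmem ⊢
  constructor <;> intro i
  · have h1 := hmem.1 i
    have h2 := hmem.2 i
    simp only [Pi.smul_apply, smul_eq_mul, Pi.zero_apply] at h1 h2 ⊢
    nlinarith
  · have h1 := hmem.1 i
    have h2 := hmem.2 i
    simp only [Pi.smul_apply, smul_eq_mul, Pi.zero_apply, Pi.one_apply] at h1 h2
    have : (2:Fin d → ℝ) i = 2 := rfl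
    rw [this]
    nlinarith

lemma memL2_dil {d : ℕ} (K : (Fin d → ℝ) → ℝ) (hm : Measurable K)
    (hb : ∀ x, |K x| ≤ 1) (hK3 : ∀ x ∉ Icc (0:Fin d → ℝ) 1, K x = 0)
    (lam : ℝ) (hl : 1/2 ≤ lam) (hl1 : lam ≤ 1) :
    MemLp (fun x => K (lam • x)) 2 (volume : Measure (Fin d → ℝ)) :=
  memL2 _ (hm.comp (measurable_id.const_smul lam)) (fun x => hb _)
    (dil_support K hK3 lam hl hl1)

lemma diff_int_le {d : ℕ} (K : (Fin d → ℝ) → ℝ) (hm : Measurable K)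
    (hb : ∀ x, |K x| ≤ 1) (hK3 : ∀ x ∉ Icc (0:Fin d → ℝ) 1, K x = 0)
    (lam : ℝ) (hl : 1/2 ≤ lam) (hl1 : lam ≤ 1) :
    ∫ x, (K (lam • x) - K x) ^ 2 ≤ 4 * 2 ^ d := by
  have hK0 : ∀ x ∉ Icc (0:Fin d → ℝ) 2, K x = 0 := by
    intro x hx
    refine hK3 _ fun hmem => hx ?_
    refine Icc_subset_Icc le_rfl ?_ hmem
    intro i
    show (1:ℝ) ≤ 2
    norm_num
  have hL2 : MemLp (fun x => K (lam • x) - K x) 2 (volume : Measure (Fin d → ℝ)) :=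
    (memL2_dil K hm hb hK3 lam hl hl1).sub (memL2 K hm hb hK0)
  refine int_le_of_le_indicator _ hL2.integrable_sq 4 fun x => ?_
  by_cases hx : x ∈ Icc (0:Fin d → ℝ) 2
  · rw [Set.indicator_of_mem hx]
    have h1 := abs_le.mp (hb (lam • x))
    have h2 := abs_le.mp (hb x)
    nlinarith [h1.1, h1.2, h2.1, h2.2]
  · rw [Set.indicator_of_notMem hx, dil_support K hK3 lam hl hl1 x hx, hK0 x hx]
    norm_num

end Statement16Helpers


open Statement16Helpers

set_option maxHeartbeats 1000000

/-- (57) : uniform continuity of the elements of `𝕂_{𝒢'}` under dilation of the kernel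
and perturbation of the normalization, where `α(ρ', u') = (ρ'⁻¹(1 + u' log ρ'))^{1/2}`. -/
theorem statement16
    (d : ℕ) (hd : 1 ≤ d)
    (𝒢 : Set ((Fin d → ℝ) → ℝ)) (hHK : HKbase d 𝒢) (hHK3 : HK3 d 𝒢)
    (ε : ℝ) (hε : 0 < ε) :
    ∃ ρ > (1:ℝ), ∃ u > (0:ℝ),
      ∀ Ψ ∈ KsetG d (Gdil d 𝒢), ∀ ρ' ∈ Icc (1:ℝ) ρ, ∀ u' ∈ Icc (0:ℝ) u, ∀ K ∈ 𝒢,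
        |Real.sqrt (ρ'⁻¹ * (1 + u' * Real.log ρ')) * Ψ (Kdil d K ρ') - Ψ K| ≤ ε := by
  have hd0 : (0:ℝ) < d := by exact_mod_cast hd
  have h2d : (0:ℝ) < 2 ^ d := by positivity
  -- extract δ₀ from (HK1b)
  have h1b := hHK.hk1b
  rw [Metric.tendsto_nhds_nhds] at h1b
  obtain ⟨δ₀, hδ₀, hS⟩ := h1b (ε^2/16) (by positivity)
  set m : ℝ := min (min 1 (δ₀/2)) (ε^2/(16*2^d)) with hm_def
  have hm0 : 0 < m := by
    apply lt_min (lt_min one_pos (by positivity)) (by positivity)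
  have hm1 : m ≤ 1 := le_trans (min_le_left _ _) (min_le_left _ _)
  have hmδ : m ≤ δ₀/2 := le_trans (min_le_left _ _) (min_le_right _ _)
  have hmε : m ≤ ε^2/(16*2^d) := min_le_right _ _
  refine ⟨1 + m, by linarith, 1, one_pos, ?_⟩
  intro Ψ hΨmem ρ' hρ' u' hu' K hK
  obtain ⟨hρ'1, hρ'ρ⟩ := hρ'
  obtain ⟨hu'0, hu'1⟩ := hu'
  have hρ'2 : ρ' ≤ 2 := by linarith
  have hρ'pos : (0:ℝ) < ρ' := by linarith
  -- extract the representing function g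
  have hΨle : JrateFn d (Gdil d 𝒢) Ψ ≤ 1 := hΨmem
  have hlt : JrateFn d (Gdil d 𝒢) Ψ < 2 := lt_of_le_of_lt hΨle ENNReal.one_lt_two
  rw [JrateFn, sInf_lt_iff] at hlt
  obtain ⟨c, hcmem, hc2⟩ := hlt
  obtain ⟨g, hgm, hg2, -, hΨeq, rfl⟩ := hcmem
  have hgsq_nonneg : 0 ≤ ∫ x, (g x)^2 := integral_nonneg fun x => sq_nonneg _
  have hgsq : ∫ x, (g x)^2 < 2 := by
    rw [show (2:ℝ≥0∞) = ENNReal.ofReal 2 by norm_num,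
      ENNReal.ofReal_lt_ofReal_iff (by norm_num)] at hc2
    exact hc2
  -- basic facts about the dilation factor
  set cc : ℝ := ρ' ^ (1/(d:ℝ)) with hcc_def
  have hcc1 : 1 ≤ cc := Real.one_le_rpow hρ'1 (by positivity)
  have hccρ' : cc ≤ ρ' := by
    have := Real.rpow_le_rpow_of_exponent_le hρ'1
      (show 1/(d:ℝ) ≤ 1 by rw [div_le_one hd0]; exact_mod_cast hd)
    rwa [Real.rpow_one] at this
  have hcc2 : cc ≤ 2 := le_trans hccρ' hρ'2
  have hccpos : 0 < cc := lt_of_lt_of_le one_pos hcc1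
  set lam : ℝ := cc⁻¹ with hlam_def
  have hlam_pos : 0 < lam := by positivity
  have hlam1 : lam ≤ 1 := by
    rw [hlam_def]; exact inv_le_one_of_one_le₀ hcc1
  have hlamhalf : 1/2 ≤ lam := by
    rw [hlam_def, one_div]
    exact inv_anti₀ hccpos hcc2
  have hlam_lb : 1 - m ≤ lam := by
    have h1 : ρ'⁻¹ ≤ lam := by
      rw [hlam_def]
      exact inv_anti₀ hccpos hccρ'
    have h2 : (1+m)⁻¹ ≤ ρ'⁻¹ := inv_anti₀ hρ'pos hρ'ρ
    have h3 : 1 - m ≤ (1+m)⁻¹ := by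
      rw [inv_eq_one_div, le_div_iff₀ (by linarith : (0:ℝ) < 1+m)]
      nlinarith only [sq_nonneg m]
    linarith
  have hlam_dist : dist lam 1 < δ₀ := by
    rw [Real.dist_eq, abs_of_nonpos (by linarith)]
    linarith
  -- the normalization constant a
  set a : ℝ := Real.sqrt (ρ'⁻¹ * (1 + u' * Real.log ρ')) with ha_def
  have hlogn : 0 ≤ Real.log ρ' := Real.log_nonneg hρ'1
  have hlog : Real.log ρ' ≤ ρ' - 1 := Real.log_le_sub_one_of_pos hρ'pos
  have harg_nonneg : 0 ≤ ρ'⁻¹ * (1 + u' * Real.log ρ') := by positivity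
  have ha_nonneg : 0 ≤ a := Real.sqrt_nonneg _
  have ha_sq : a^2 = ρ'⁻¹ * (1 + u' * Real.log ρ') := Real.sq_sqrt harg_nonneg
  have hinv_le : ρ'⁻¹ ≤ 1 := by
    rw [inv_le_one_iff₀]; right; exact hρ'1
  have ha_ub : a^2 ≤ 1 + m := by
    rw [ha_sq]
    have h0 : u' * Real.log ρ' ≤ Real.log ρ' := mul_le_of_le_one_left hlogn hu'1
    have h1 : 1 + u' * Real.log ρ' ≤ 1 + (ρ' - 1) := by linarith only [h0, hlog]
    have h1' : 0 ≤ u' * Real.log ρ' := mul_nonneg hu'0 hlogn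
    have h2 : ρ'⁻¹ * (1 + u' * Real.log ρ') ≤ 1 + u' * Real.log ρ' :=
      mul_le_of_le_one_left (by linarith only [h1']) hinv_le
    linarith only [h1, h2, hρ'ρ]
  have ha_lb : 1 - m ≤ a^2 := by
    rw [ha_sq]
    have h2 : (1+m)⁻¹ ≤ ρ'⁻¹ := inv_anti₀ hρ'pos hρ'ρ
    have h3 : 1 - m ≤ (1+m)⁻¹ := by
      rw [inv_eq_one_div, le_div_iff₀ (by linarith : (0:ℝ) < 1+m)]
      nlinarith only [sq_nonneg m]
    have h1' : 0 ≤ u' * Real.log ρ' := mul_nonneg hu'0 hlogn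
    have h4 : ρ'⁻¹ ≤ ρ'⁻¹ * (1 + u' * Real.log ρ') :=
      le_mul_of_one_le_right (by positivity) (by linarith only [h1'])
    linarith only [h2, h3, h4]
  have ham : (a-1)^2 ≤ m := by
    have h1 : |a - 1| * (a + 1) = |a^2 - 1| := by
      rw [show a^2 - 1 = (a-1)*(a+1) by ring, abs_mul,
        abs_of_nonneg (show (0:ℝ) ≤ a + 1 by linarith)]
    have h2 : |a^2 - 1| ≤ m := abs_le.mpr ⟨by linarith, by linarith⟩
    have h3 : |a - 1| ≤ m := by
      calc |a - 1| ≤ |a - 1| * (a + 1) :=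
        le_mul_of_one_le_right (abs_nonneg _) (by linarith)
      _ = |a^2 - 1| := h1
      _ ≤ m := h2
    calc (a-1)^2 = |a-1| * |a-1| := by rw [abs_mul_abs_self]; ring
    _ ≤ m * m := mul_le_mul h3 h3 (abs_nonneg _) (le_trans (abs_nonneg _) h3)
    _ ≤ 1 * m := mul_le_mul_of_nonneg_right hm1 (le_of_lt hm0)
    _ = m := one_mul m
  -- L² facts about the kernels
  have hKmeas : Measurable K := hHK.meas K hK
  have hKb : ∀ x, |K x| ≤ 1 := hHK.hk2 K hK
  have hK3K : ∀ x ∉ Icc (0:Fin d → ℝ) 1, K x = 0 := hHK3 K hK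
  have hK0 : ∀ x ∉ Icc (0:Fin d → ℝ) 2, K x = 0 := by
    intro x hx
    refine hK3K _ fun hmem => hx ?_
    refine Icc_subset_Icc le_rfl ?_ hmem
    intro i
    show (1:ℝ) ≤ 2
    norm_num
  have hKL2 : MemLp K 2 (volume : Measure (Fin d → ℝ)) := memL2 K hKmeas hKb hK0
  have hhdil : Kdil d K ρ' = fun x => K (lam • x) := rfl
  have hhL2 : MemLp (Kdil d K ρ') 2 (volume : Measure (Fin d → ℝ)) := by
    rw [hhdil]; exact memL2_dil K hKmeas hKb hK3K lam hlamhalf hlam1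
  set h : (Fin d → ℝ) → ℝ := Kdil d K ρ' with hh_def
  have hhb : ∀ x, |h x| ≤ 1 := fun x => hKb _
  have hh0 : ∀ x ∉ Icc (0:Fin d → ℝ) 2, h x = 0 :=
    fun x hx => dil_support K hK3K lam hlamhalf hlam1 x hx
  -- ∫ h² ≤ 2^d
  have hh_sq : ∫ x, (h x)^2 ≤ 1 * 2 ^ d := by
    refine int_le_of_le_indicator _ hhL2.integrable_sq 1 fun x => ?_
    by_cases hx : x ∈ Icc (0:Fin d → ℝ) 2
    · rw [Set.indicator_of_mem hx]
      have hc := abs_le.mp (hhb x)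
      nlinarith only [hc.1, hc.2]
    · rw [Set.indicator_of_notMem hx, hh0 x hx]
      norm_num
  have hh_sq_nonneg : 0 ≤ ∫ x, (h x)^2 := integral_nonneg fun x => sq_nonneg _
  -- ∫ (h - K)² < ε²/16 via HK1b
  have hdiff_lt : ∫ x, (h x - K x)^2 < ε^2/16 := by
    have hsup := hS hlam_dist
    rw [Real.dist_eq, sub_zero] at hsup
    have hle : ∫ x, (K (lam • x) - K x)^2 ≤ ⨆ K' ∈ 𝒢, ∫ x, (K' (lam • x) - K' x)^2 := by
      have hbdd : BddAbove (Set.range fun K' : (Fin d → ℝ) → ℝ =>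
          ⨆ _ : K' ∈ 𝒢, ∫ x, (K' (lam • x) - K' x)^2) := by
        refine ⟨4 * 2 ^ d, ?_⟩
        rintro y ⟨K', rfl⟩
        show (⨆ _ : K' ∈ 𝒢, ∫ x, (K' (lam • x) - K' x)^2) ≤ 4 * 2 ^ d
        by_cases hK' : K' ∈ 𝒢
        · rw [ciSup_pos (p := K' ∈ 𝒢)
            (f := fun _ => ∫ x, (K' (lam • x) - K' x)^2) hK']
          exact diff_int_le K' (hHK.meas K' hK') (hHK.hk2 K' hK') (hHK3 K' hK')
            lam hlamhalf hlam1
        · haveI : IsEmpty (K' ∈ 𝒢) := ⟨hK'⟩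
          rw [Real.iSup_of_isEmpty]
          positivity
      calc ∫ x, (K (lam • x) - K x)^2 = ⨆ _ : K ∈ 𝒢, ∫ x, (K (lam • x) - K x)^2 :=
        (ciSup_pos (p := K ∈ 𝒢) (f := fun _ => ∫ x, (K (lam • x) - K x)^2) hK).symm
      _ ≤ ⨆ K' ∈ 𝒢, ∫ x, (K' (lam • x) - K' x)^2 := le_ciSup hbdd K
    have he : (fun x => (h x - K x)^2) = fun x => (K (lam • x) - K x)^2 := rfl
    rw [he]
    calc ∫ x, (K (lam • x) - K x)^2 ≤ ⨆ K' ∈ 𝒢, ∫ x, (K' (lam • x) - K' x)^2 := hle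
    _ ≤ |⨆ K' ∈ 𝒢, ∫ x, (K' (lam • x) - K' x)^2| := le_abs_self _
    _ < ε^2/16 := hsup
  have hdiff_nonneg : 0 ≤ ∫ x, (h x - K x)^2 := integral_nonneg fun x => sq_nonneg _
  -- Ψ values
  have hΨK : Ψ K = ∫ x, g x * K x := by
    refine hΨeq K ⟨K, hK, 1, ⟨le_rfl, one_le_two⟩, ?_⟩
    funext x
    simp [Kdil, Real.one_rpow]
  have hΨh : Ψ (Kdil d K ρ') = ∫ x, g x * h x := hΨeq _ ⟨K, hK, ρ', ⟨hρ'1, hρ'2⟩, rfl⟩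
  -- the difference function φ
  set φ : (Fin d → ℝ) → ℝ := fun x => a * h x - K x with hφ_def
  have hφL2 : MemLp φ 2 (volume : Measure (Fin d → ℝ)) := (hhL2.const_mul a).sub hKL2
  have i1 : Integrable (fun x => g x * h x) (volume : Measure (Fin d → ℝ)) :=
    intmul _ _ hg2 hhL2
  have i2 : Integrable (fun x => g x * K x) (volume : Measure (Fin d → ℝ)) :=
    intmul _ _ hg2 hKL2
  have key : a * Ψ (Kdil d K ρ') - Ψ K = ∫ x, g x * φ x := by
    rw [hΨK, hΨh]
    have e : (fun x => g x * φ x) = fun x => a * (g x * h x) - g x * K x := by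
      funext x; rw [hφ_def]; ring
    rw [e, integral_sub (i1.const_mul a) i2, integral_const_mul]
  -- bound ∫ φ²
  have hφsq : ∫ x, (φ x)^2 ≤ ε^2/4 := by
    have hpt : ∀ x, (φ x)^2 ≤ 2*(a-1)^2*(h x)^2 + 2*(h x - K x)^2 := by
      intro x
      simp only [hφ_def]
      nlinarith only [sq_nonneg ((a-1)*h x - (h x - K x))]
    have hdKL2 : MemLp (fun x => h x - K x) 2 (volume : Measure (Fin d → ℝ)) :=
      hhL2.sub hKL2
    have ia : Integrable (fun x => 2*(a-1)^2*(h x)^2) (volume : Measure (Fin d → ℝ)) :=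
      hhL2.integrable_sq.const_mul _
    have ib : Integrable (fun x => 2*(h x - K x)^2) (volume : Measure (Fin d → ℝ)) :=
      hdKL2.integrable_sq.const_mul 2
    have hRHS : Integrable (fun x => 2*(a-1)^2*(h x)^2 + 2*(h x - K x)^2)
        (volume : Measure (Fin d → ℝ)) := ia.add ib
    have h1 : ∫ x, (φ x)^2 ≤ ∫ x, (2*(a-1)^2*(h x)^2 + 2*(h x - K x)^2) :=
      integral_mono hφL2.integrable_sq hRHS hpt
    have h2 : ∫ x, (2*(a-1)^2*(h x)^2 + 2*(h x - K x)^2) =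
        (2*(a-1)^2) * (∫ x, (h x)^2) + 2 * ∫ x, (h x - K x)^2 := by
      rw [integral_add ia ib, integral_const_mul, integral_const_mul]
    have h3 : (2*(a-1)^2) * (∫ x, (h x)^2) ≤ ε^2/8 := by
      have hb1 : (2*(a-1)^2) * (∫ x, (h x)^2) ≤ 2 * m * (1 * 2^d) := by
        nlinarith only [ham, hh_sq, hh_sq_nonneg, hm0, sq_nonneg (a-1), h2d]
      have hb2 : 2 * m * (1 * 2^d) ≤ ε^2/8 := by
        have hb3 : m * 2^d ≤ ε^2/16 := by
          calc m * 2^d ≤ (ε^2/(16*2^d)) * 2^d :=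
            mul_le_mul_of_nonneg_right hmε (le_of_lt h2d)
          _ = ε^2/16 := by field_simp
        linarith only [hb3]
      linarith only [hb1, hb2]
    have h4 : 2 * ∫ x, (h x - K x)^2 ≤ ε^2/8 := by linarith only [hdiff_lt]
    linarith only [h1, h2, h3, h4]
  have hφsq_nonneg : 0 ≤ ∫ x, (φ x)^2 := integral_nonneg fun x => sq_nonneg _
  -- final chain
  rw [key]
  calc |∫ x, g x * φ x| ≤ Real.sqrt (∫ x, (g x)^2) * Real.sqrt (∫ x, (φ x)^2) := CS g φ hg2 hφL2
  _ ≤ Real.sqrt 2 * (ε/2) := by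
    refine mul_le_mul ?_ ?_ (Real.sqrt_nonneg _) (Real.sqrt_nonneg _)
    · exact Real.sqrt_le_sqrt (le_of_lt hgsq)
    · calc Real.sqrt (∫ x, (φ x)^2) ≤ Real.sqrt (ε^2/4) := Real.sqrt_le_sqrt hφsq
      _ = ε/2 := by
        rw [show ε^2/4 = (ε/2)^2 by ring, Real.sqrt_sq (by positivity)]
  _ ≤ ε := by
    have hsqrt2 : Real.sqrt 2 ≤ 2 := by
      nlinarith only [Real.sq_sqrt (show (0:ℝ) ≤ 2 by norm_num), Real.sqrt_nonneg 2]
    nlinarith only [hsqrt2, hε]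

end
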